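/- Fix c ∈ ℂ and t ∈ ℝ, and set U(z,t) = i(z² − 2it − c)/(|z|² + |z² + 2it + c|²) (defined wherever the denominator is nonzero). Then the function z ↦ U(z,t) is square-integrable over ℂ ≅ ℝ² with respect to Lebesgue measure: ∫_{ℝ²} |U(z,t)|² dx dy < ∞. -/

import Mathlib

open Complex MeasureTheory

private lemma keyu (u b : ℝ) (hu : 0 ≤ u) (hb : 0 < b) :
    2*(u+b)*(1+u) ≤ (6*(1+b)+2/b)*(u+(u-b)^2) := by
  have h : (6*(1+b)+2/b) = (6*(1+b)*b + 2)/b := by field_simp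
  rw [h, div_mul_eq_mul_div, le_div_iff₀ hb]
  nlinarith [sq_nonneg (u-b), sq_nonneg (u*b), sq_nonneg u, sq_nonneg b,
    mul_nonneg hu hb.le, sq_nonneg (b*u - b), sq_nonneg ((6*b*b+4*b+2)*u + (-12*b^3-8*b^2+2)/2),
    mul_nonneg (mul_nonneg hu hu) hb.le, mul_nonneg (mul_nonneg hb.le hb.le) hb.le]

private lemma keys (s b : ℝ) (_hs : 0 ≤ s) (hb : 0 ≤ b) :
    (s^2+b)*(1+s)^2 ≤ (6*(1+b)+2/b)*(s^2+(s^2-b)^2) := by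
  rcases hb.eq_or_lt with h | h
  · subst h
    simp only [add_zero, sub_zero, div_zero]
    nlinarith [sq_nonneg (1-s), sq_nonneg s, sq_nonneg (s*s), sq_nonneg (s*(1-s))]
  · calc (s^2+b)*(1+s)^2 ≤ (s^2+b)*(2*(1+s^2)) := by
          apply mul_le_mul_of_nonneg_left _ (by positivity)
          nlinarith [sq_nonneg (1-s)]
    _ = 2*(s^2+b)*(1+s^2) := by ring
    _ ≤ (6*(1+b)+2/b)*(s^2+(s^2-b)^2) := keyu (s^2) b (sq_nonneg s) h

theorem square_integrable_n1 (c : ℂ) (t : ℝ) :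
    Integrable (fun z : ℂ =>
      ‖Complex.I * (z ^ 2 - 2 * Complex.I * (t : ℂ) - c) /
        ((Complex.normSq z + Complex.normSq (z ^ 2 + 2 * Complex.I * (t : ℂ) + c) : ℝ) : ℂ)‖ ^ 2)
      volume := by
  set a : ℂ := 2 * Complex.I * (t : ℂ) + c with ha
  set b : ℝ := ‖a‖ with hb
  set C : ℝ := 6*(1+b)+2/b with hC
  have hb0 : 0 ≤ b := norm_nonneg a
  have hC0 : 0 ≤ C := by positivity
  have hmeas : AEStronglyMeasurable (fun z : ℂ =>
      ‖Complex.I * (z ^ 2 - 2 * Complex.I * (t : ℂ) - c) /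
        ((Complex.normSq z + Complex.normSq (z ^ 2 + 2 * Complex.I * (t : ℂ) + c) : ℝ) : ℂ)‖ ^ 2)
      volume := by
    have hden : Measurable (fun z : ℂ =>
        ((Complex.normSq z + Complex.normSq (z ^ 2 + 2 * Complex.I * (t : ℂ) + c) : ℝ) : ℂ)) := by
      apply Continuous.measurable
      exact Complex.continuous_ofReal.comp (Complex.continuous_normSq.add
        (Complex.continuous_normSq.comp (by continuity)))
    have hnum : Measurable (fun z : ℂ => Complex.I * (z ^ 2 - 2 * Complex.I * (t : ℂ) - c)) := by
      apply Continuous.measurable; continuity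
    exact (((hnum.div hden).norm).pow_const 2).aestronglyMeasurable
  have hint : Integrable (fun z : ℂ => C^2 * ((1:ℝ) + ‖z‖) ^ (-(4:ℝ))) volume := by
    exact (integrable_one_add_norm (by simp [Complex.finrank_real_complex]; norm_num)).const_mul _
  refine hint.mono' hmeas (Filter.Eventually.of_forall fun z => ?_)
  set s : ℝ := ‖z‖ with hs
  have hs0 : 0 ≤ s := norm_nonneg z
  set d : ℝ := Complex.normSq z + Complex.normSq (z ^ 2 + 2 * Complex.I * (t : ℂ) + c) with hd
  have hd0 : 0 ≤ d := add_nonneg (Complex.normSq_nonneg _) (Complex.normSq_nonneg _)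
  set N : ℝ := ‖z ^ 2 - 2 * Complex.I * (t : ℂ) - c‖ with hN
  have hnorm : ‖Complex.I * (z ^ 2 - 2 * Complex.I * (t : ℂ) - c) / ((d : ℝ) : ℂ)‖ = N / d := by
    rw [norm_div, norm_mul, Complex.norm_I, one_mul, Complex.norm_real, Real.norm_of_nonneg hd0]
  rw [Real.norm_of_nonneg (by positivity), hnorm]
  have hrpow : ((1:ℝ) + s) ^ (-(4:ℝ)) = (((1:ℝ)+s)^(4:ℕ))⁻¹ := by
    rw [Real.rpow_neg (by positivity), ← Real.rpow_natCast (1+s) 4]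
    norm_num
  rw [hrpow]
  rcases hd0.eq_or_lt with h0 | h0
  · rw [← h0, div_zero]
    norm_num
    positivity
  -- key inequality : N * (1+s)^2 ≤ C * d
  have hNle : N ≤ s^2 + b := by
    calc N ≤ ‖z^2‖ + ‖2 * Complex.I * (t:ℂ) + c‖ := by
          rw [hN]
          have : z ^ 2 - 2 * Complex.I * (t : ℂ) - c = z^2 - (2 * Complex.I * (t:ℂ) + c) := by ring
          rw [this]
          exact norm_sub_le _ _
    _ = s^2 + b := by rw [norm_pow, hs, hb, ha]
  have hdge : s^2 + (s^2 - b)^2 ≤ d := by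
    have h1 : Complex.normSq z = s^2 := by rw [Complex.normSq_eq_norm_sq, hs]
    have h2 : (s^2 - b)^2 ≤ Complex.normSq (z ^ 2 + 2 * Complex.I * (t : ℂ) + c) := by
      have habs : |s^2 - b| ≤ ‖z^2 + a‖ := by
        have := abs_norm_sub_norm_le (z^2) (-a)
        simpa [norm_pow, sub_neg_eq_add] using this
      have h3 : Complex.normSq (z^2 + a) = ‖z^2 + a‖^2 := by
        rw [Complex.normSq_eq_norm_sq]
      have h4 : z ^ 2 + 2 * Complex.I * (t : ℂ) + c = z^2 + a := by rw [ha]; ring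
      rw [h4, h3]
      calc (s^2-b)^2 = |s^2-b|^2 := (_root_.sq_abs _).symm
      _ ≤ ‖z^2+a‖^2 := pow_le_pow_left₀ (abs_nonneg _) habs 2
    rw [hd, h1]
    exact add_le_add_right h2 _
  have hkey : N * (1+s)^2 ≤ C * d := by
    calc N * (1+s)^2 ≤ (s^2+b)*(1+s)^2 :=
          mul_le_mul_of_nonneg_right hNle (by positivity)
    _ ≤ C*(s^2+(s^2-b)^2) := keys s b hs0 hb0
    _ ≤ C*d := mul_le_mul_of_nonneg_left hdge hC0
  have h1 : N*(1+s)^2/d ≤ C := (div_le_iff₀ h0).2 hkey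
  have h2 : (N*(1+s)^2/d)^2 ≤ C^2 := pow_le_pow_left₀ (by positivity) h1 2
  rw [← div_eq_mul_inv, le_div_iff₀ (by positivity)]
  calc (N/d)^2 * (1+s)^4 = (N*(1+s)^2/d)^2 := by ring
  _ ≤ C^2 := h2
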